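/- arXiv:2402.18129 — 3 statements merged into one kernel-verified Lean document; each statement's English description precedes it below -/
import Mathlib

section
/- Consider the generalized fair learning problem: minimize E_{(x,s)∼P_{X,S}}[ TV(Q_{Ŷ|X=x,S=s}, P_{Y|X=x,S=s}) ] over conditional distributions Q_{Ŷ|X,S} subject to DDP(Ŷ, S) ≤ ε, where Ŷ is distributed according to Q_{Ŷ|X,S} · P_{X,S}. Suppose there exists φ : 𝒳 × 𝒴 → ℝ such that P(X=x | Y=y, S=s) / P(X=x | S=s) = φ(x, y) for all x ∈ 𝒳, y ∈ 𝒴, s ∈ 𝒮, and s_max ∈ 𝒮 satisfies P_S(s_max) = 1/2 + δ for some δ > 0. Then for any optimal solution Q*, the induced Ŷ satisfies for every s ∈ 𝒮: TV(P_{Ŷ|S=s}, P_{Y|S=s_max}) ≤ (1/2 + 1/(4δ)) · ε. -/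
open Finset

noncomputable section

variable {𝒳 𝒴 𝒮 : Type*} [Fintype 𝒳] [Fintype 𝒴] [Fintype 𝒮]

/-- Total variation distance between two finitely supported distributions on `𝒴`,
`TV(p, q) = (1/2) ∑ y, |p y - q y|`. -/
def TV (p q : 𝒴 → ℝ) : ℝ := (1 / 2) * ∑ y, |p y - q y|

/-- Marginal distribution of `(X, S)` under the joint `P` of `(X, Y, S)`. -/
def margXS (P : 𝒳 → 𝒴 → 𝒮 → ℝ) (x : 𝒳) (s : 𝒮) : ℝ := ∑ y, P x y s

/-- Marginal distribution of `(Y, S)`. -/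
def margYS (P : 𝒳 → 𝒴 → 𝒮 → ℝ) (y : 𝒴) (s : 𝒮) : ℝ := ∑ x, P x y s

/-- Marginal distribution of `S`. -/
def margS (P : 𝒳 → 𝒴 → 𝒮 → ℝ) (s : 𝒮) : ℝ := ∑ x, margXS P x s

/-- Marginal distribution of `X`. -/
def margX (P : 𝒳 → 𝒴 → 𝒮 → ℝ) (x : 𝒳) : ℝ := ∑ s, margXS P x s

/-- Conditional distribution of `Y` given `X = x, S = s`. -/
def condYXS (P : 𝒳 → 𝒴 → 𝒮 → ℝ) (x : 𝒳) (s : 𝒮) (y : 𝒴) : ℝ := P x y s / margXS P x s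

/-- Conditional distribution of `Y` given `S = s`. -/
def condYS (P : 𝒳 → 𝒴 → 𝒮 → ℝ) (s : 𝒮) (y : 𝒴) : ℝ := margYS P y s / margS P s

/-- The ratio `P(X=x | Y=y, S=s) / P(X=x | S=s)`. -/
def condRatio (P : 𝒳 → 𝒴 → 𝒮 → ℝ) (x : 𝒳) (y : 𝒴) (s : 𝒮) : ℝ :=
  (P x y s / margYS P y s) / (margXS P x s / margS P s)

/-- A conditional distribution `Q`: for every `(x, s)`, `Q x s` is a probability
distribution on labels. -/
def IsRule (Q : 𝒳 → 𝒮 → 𝒴 → ℝ) : Prop :=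
  (∀ x s y, 0 ≤ Q x s y) ∧ ∀ x s, ∑ y, Q x s y = 1

/-- The generalized objective: `E_{(x,s)∼P_{X,S}}[TV(Q_{Ŷ|X=x,S=s}, P_{Y|X=x,S=s})]`. -/
def objective (P : 𝒳 → 𝒴 → 𝒮 → ℝ) (Q : 𝒳 → 𝒮 → 𝒴 → ℝ) : ℝ :=
  ∑ x, ∑ s, margXS P x s * TV (Q x s) (condYXS P x s)

/-- Joint distribution of `(Ŷ, S)` induced by `Q · P_{X,S}`. -/
def jointYhatS (P : 𝒳 → 𝒴 → 𝒮 → ℝ) (Q : 𝒳 → 𝒮 → 𝒴 → ℝ) (yh : 𝒴) (s : 𝒮) : ℝ :=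
  ∑ x, margXS P x s * Q x s yh

/-- Marginal distribution of the prediction `Ŷ`. -/
def margYhat (P : 𝒳 → 𝒴 → 𝒮 → ℝ) (Q : 𝒳 → 𝒮 → 𝒴 → ℝ) (yh : 𝒴) : ℝ :=
  ∑ s, jointYhatS P Q yh s

/-- Conditional distribution of the prediction `Ŷ` given `S = s`. -/
def condYhatS (P : 𝒳 → 𝒴 → 𝒮 → ℝ) (Q : 𝒳 → 𝒮 → 𝒴 → ℝ) (s : 𝒮) (yh : 𝒴) : ℝ :=
  jointYhatS P Q yh s / margS P s

/-- Difference of demographic parity of the prediction `Ŷ` induced by rule `Q`. -/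
def DDP (P : 𝒳 → 𝒴 → 𝒮 → ℝ) (Q : 𝒳 → 𝒮 → 𝒴 → ℝ) : ℝ :=
  ∑ yh, ∑ s, |condYhatS P Q s yh - margYhat P Q yh|

lemma TV_nonneg (p q : 𝒴 → ℝ) : 0 ≤ TV p q := by
  unfold TV; positivity

lemma TV_comm (p q : 𝒴 → ℝ) : TV p q = TV q p := by
  unfold TV; congr 1; exact Finset.sum_congr rfl fun y _ => abs_sub_comm _ _

lemma TV_self (p : 𝒴 → ℝ) : TV p p = 0 := by
  simp [TV]

lemma TV_triangle (p q r : 𝒴 → ℝ) : TV p r ≤ TV p q + TV q r := by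
  unfold TV
  rw [← mul_add, ← Finset.sum_add_distrib]
  gcongr with y _
  exact (abs_sub_le _ _ _)

set_option maxHeartbeats 1000000

/-- **Theorem 3 (DDP case).** In the generalized fair learning problem, if the ratio
`P(x|y,s)/P(x|s)` does not depend on `s` and `P_S(s_max) = 1/2 + δ` with `δ > 0`, then
any optimal solution among rules with `DDP(Ŷ, S) ≤ ε` satisfies, for every `s`,
`TV(P_{Ŷ|S=s}, P_{Y|S=s_max}) ≤ (1/2 + 1/(4δ)) ε`. -/
theorem generalized_ddp_fair_optimal_inductive_bias
    (P : 𝒳 → 𝒴 → 𝒮 → ℝ)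
    (hP0 : ∀ x y s, 0 ≤ P x y s)
    (hP1 : ∑ x, ∑ y, ∑ s, P x y s = 1)
    (hXS : ∀ x s, 0 < margXS P x s)
    (hYS : ∀ y s, 0 < margYS P y s)
    (φ : 𝒳 → 𝒴 → ℝ)
    (hφ : ∀ x y s, condRatio P x y s = φ x y)
    (smax : 𝒮) (δ : ℝ) (hδ : 0 < δ) (hsmax : margS P smax = 1 / 2 + δ)
    (ε : ℝ)
    (Q : 𝒳 → 𝒮 → 𝒴 → ℝ) (hQ : IsRule Q)
    (hfair : DDP P Q ≤ ε)
    (hopt : ∀ Q' : 𝒳 → 𝒮 → 𝒴 → ℝ, IsRule Q' → DDP P Q' ≤ ε →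
      objective P Q ≤ objective P Q') :
    ∀ s, TV (condYhatS P Q s) (condYS P smax) ≤ (1 / 2 + 1 / (4 * δ)) * ε := by
  classical
  -- nonemptiness
  have hXne : Nonempty 𝒳 := by
    by_contra h
    rw [not_nonempty_iff] at h
    simp [Finset.univ_eq_empty] at hP1
  have hSpos : ∀ s, 0 < margS P s := by
    intro s
    exact Finset.sum_pos (fun x _ => hXS x s) Finset.univ_nonempty
  -- sum of margS is 1
  have hsumS : ∑ s, margS P s = 1 := by
    calc ∑ s, ∑ x, ∑ y, P x y s = ∑ x, ∑ s, ∑ y, P x y s := Finset.sum_comm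
      _ = ∑ x, ∑ y, ∑ s, P x y s :=
        Finset.sum_congr rfl fun x _ => Finset.sum_comm
      _ = 1 := hP1
  -- key algebraic identity
  have hkey : ∀ x y s, margXS P x s * φ x y = P x y s * margS P s / margYS P y s := by
    intro x y s
    have h := (hφ x y s).symm
    rw [condRatio] at h
    have h1 := (hXS x s).ne'
    have h2 := (hYS y s).ne'
    have h3 := (hSpos s).ne'
    rw [h]
    field_simp
  have hφ0 : ∀ x y, 0 ≤ φ x y := by
    intro x y
    have h := hkey x y smax
    have h2 : 0 ≤ margXS P x smax * φ x y := by
      rw [h]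
      exact div_nonneg (mul_nonneg (hP0 _ _ _) (hSpos smax).le) (hYS _ smax).le
    nlinarith [hXS x smax]
  -- row sums
  have hrow : ∀ x, ∑ y, φ x y * condYS P smax y = 1 := by
    intro x
    have : ∀ y, φ x y * condYS P smax y = P x y smax / margXS P x smax := by
      intro y
      have h := hkey x y smax
      rw [condYS]
      have h1 := (hXS x smax).ne'
      have h2 := (hYS y smax).ne'
      have h3 := (hSpos smax).ne'
      field_simp at h ⊢
      linarith [h]
    rw [Finset.sum_congr rfl fun y _ => this y, ← Finset.sum_div]
    rw [show (∑ y, P x y smax) = margXS P x smax from rfl]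
    exact div_self (hXS x smax).ne'
  -- column sums
  have hcol : ∀ y s, ∑ x, margXS P x s * φ x y = margS P s := by
    intro y s
    have : ∀ x, margXS P x s * φ x y = P x y s * (margS P s / margYS P y s) := by
      intro x
      rw [hkey x y s, mul_div_assoc]
    rw [Finset.sum_congr rfl fun x _ => this x, ← Finset.sum_mul]
    rw [show (∑ x, P x y s) = margYS P y s from rfl]
    rw [mul_div_cancel₀ _ (hYS y s).ne']
  -- conditional factorization
  have hcond : ∀ x s y, condYXS P x s y = φ x y * condYS P s y := by
    intro x s y
    have h := hkey x y s
    rw [condYXS, condYS]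
    have h1 := (hXS x s).ne'
    have h2 := (hYS y s).ne'
    have h3 := (hSpos s).ne'
    field_simp at h ⊢
    linarith [h]
  -- nonnegativity of ε
  have hDDPnn : 0 ≤ DDP P Q :=
    Finset.sum_nonneg fun yh _ => Finset.sum_nonneg fun s _ => abs_nonneg _
  have hε : 0 ≤ ε := le_trans hDDPnn hfair
  have hqnn : ∀ s y, 0 ≤ condYS P s y := fun s y =>
    div_nonneg (hYS y s).le (hSpos s).le
  -- the comparison rule
  set Q' : 𝒳 → 𝒮 → 𝒴 → ℝ := fun x _ y => φ x y * condYS P smax y with hQ'def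
  have hQ'rule : IsRule Q' :=
    ⟨fun x s y => mul_nonneg (hφ0 x y) (hqnn smax y), fun x s => hrow x⟩
  have hjoint' : ∀ yh s, jointYhatS P Q' yh s = margS P s * condYS P smax yh := by
    intro yh s
    rw [jointYhatS]
    calc ∑ x, margXS P x s * Q' x s yh
        = (∑ x, margXS P x s * φ x yh) * condYS P smax yh := by
          rw [Finset.sum_mul]
          exact Finset.sum_congr rfl fun x _ => (mul_assoc _ _ _).symm
      _ = margS P s * condYS P smax yh := by rw [hcol yh s]
  have hcondYhat' : ∀ s yh, condYhatS P Q' s yh = condYS P smax yh := by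
    intro s yh
    rw [condYhatS, hjoint', mul_comm, mul_div_assoc, div_self (hSpos s).ne', mul_one]
  have hmargYhat' : ∀ yh, margYhat P Q' yh = condYS P smax yh := by
    intro yh
    rw [margYhat, Finset.sum_congr rfl fun s (_ : s ∈ Finset.univ) => hjoint' yh s,
      ← Finset.sum_mul, hsumS, one_mul]
  have hDDP' : DDP P Q' = 0 := by
    rw [DDP]
    refine Finset.sum_eq_zero fun yh _ => Finset.sum_eq_zero fun s _ => ?_
    rw [hcondYhat' s yh, hmargYhat' yh, sub_self, abs_zero]
  -- objective of the comparison rule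
  have hpull : ∀ s, margS P s * TV (condYS P s) (condYS P smax)
      = (1/2) * ∑ y, margS P s * |condYS P s y - condYS P smax y| := by
    intro s
    rw [TV, mul_left_comm, Finset.mul_sum]
  have hobj' : objective P Q' = ∑ s, margS P s * TV (condYS P s) (condYS P smax) := by
    rw [objective, Finset.sum_comm]
    refine Finset.sum_congr rfl fun s _ => ?_
    have hTVx : ∀ x, TV (Q' x s) (condYXS P x s)
        = (1/2) * ∑ y, φ x y * |condYS P s y - condYS P smax y| := by
      intro x
      rw [TV]
      congr 1
      refine Finset.sum_congr rfl fun y _ => ?_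
      have : Q' x s y - condYXS P x s y = φ x y * (condYS P smax y - condYS P s y) := by
        rw [hcond x s y, hQ'def, mul_sub]
      rw [this, abs_mul, abs_of_nonneg (hφ0 x y), abs_sub_comm]
    calc ∑ x, margXS P x s * TV (Q' x s) (condYXS P x s)
        = ∑ x, ∑ y, (1/2) * (margXS P x s * (φ x y * |condYS P s y - condYS P smax y|)) := by
          refine Finset.sum_congr rfl fun x _ => ?_
          rw [hTVx x, mul_left_comm, Finset.mul_sum, Finset.mul_sum]
      _ = ∑ y, ∑ x, (1/2) * (margXS P x s * (φ x y * |condYS P s y - condYS P smax y|)) :=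
          Finset.sum_comm
      _ = (1/2) * ∑ y, (∑ x, margXS P x s * φ x y) * |condYS P s y - condYS P smax y| := by
          rw [Finset.mul_sum]
          refine Finset.sum_congr rfl fun y _ => ?_
          rw [Finset.sum_mul, Finset.mul_sum]
          exact Finset.sum_congr rfl fun x _ => by ring
      _ = (1/2) * ∑ y, margS P s * |condYS P s y - condYS P smax y| := by
          rw [Finset.sum_congr rfl fun y (_ : y ∈ Finset.univ) => by rw [hcol y s]]
      _ = margS P s * TV (condYS P s) (condYS P smax) := (hpull s).symm
  -- convexity lower bound on the objective
  have hlow : ∀ s, margS P s * TV (condYhatS P Q s) (condYS P s)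
      ≤ ∑ x, margXS P x s * TV (Q x s) (condYXS P x s) := by
    intro s
    have hms := hSpos s
    have e1 : ∀ y, margS P s * |condYhatS P Q s y - condYS P s y|
        = |∑ x, margXS P x s * (Q x s y - condYXS P x s y)| := by
      intro y
      rw [← abs_of_pos hms, ← abs_mul]
      congr 1
      rw [mul_sub, condYhatS, condYS, mul_div_cancel₀ _ hms.ne', mul_div_cancel₀ _ hms.ne']
      rw [jointYhatS, margYS]
      rw [← Finset.sum_sub_distrib]
      refine Finset.sum_congr rfl fun x _ => ?_
      rw [mul_sub, condYXS, mul_div_cancel₀ _ (hXS x s).ne']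
    calc margS P s * TV (condYhatS P Q s) (condYS P s)
        = (1/2) * ∑ y, |∑ x, margXS P x s * (Q x s y - condYXS P x s y)| := by
          rw [TV, mul_left_comm, Finset.mul_sum]
          exact congrArg _ (Finset.sum_congr rfl fun y _ => e1 y)
      _ ≤ (1/2) * ∑ y, ∑ x, margXS P x s * |Q x s y - condYXS P x s y| := by
          gcongr with y _
          calc |∑ x, margXS P x s * (Q x s y - condYXS P x s y)|
              ≤ ∑ x, |margXS P x s * (Q x s y - condYXS P x s y)| :=
                Finset.abs_sum_le_sum_abs _ _
            _ = ∑ x, margXS P x s * |Q x s y - condYXS P x s y| :=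
                Finset.sum_congr rfl fun x _ => by
                  rw [abs_mul, abs_of_pos (hXS x s)]
      _ = ∑ x, margXS P x s * TV (Q x s) (condYXS P x s) := by
          have hx : ∀ x, margXS P x s * TV (Q x s) (condYXS P x s)
              = (1/2) * ∑ y, margXS P x s * |Q x s y - condYXS P x s y| := fun x => by
            rw [TV, mul_left_comm, Finset.mul_sum]
          rw [Finset.sum_comm, Finset.mul_sum]
          exact Finset.sum_congr rfl fun x _ => (hx x).symm
  have hobjlow : ∑ s, margS P s * TV (condYhatS P Q s) (condYS P s) ≤ objective P Q := by
    rw [objective, Finset.sum_comm]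
    exact Finset.sum_le_sum fun s _ => hlow s
  -- DDP as a sum of TVs
  have hDDPeq : DDP P Q = 2 * ∑ s, TV (condYhatS P Q s) (margYhat P Q) := by
    rw [DDP, Finset.sum_comm, Finset.mul_sum]
    refine Finset.sum_congr rfl fun s _ => ?_
    rw [TV]; ring
  have hsumTV : ∑ s, TV (condYhatS P Q s) (margYhat P Q) ≤ ε / 2 := by
    rw [hDDPeq] at hfair; linarith
  -- set up the erased sum
  set E : Finset 𝒮 := Finset.univ.erase smax with hE
  have hEsum : ∀ f : 𝒮 → ℝ, f smax + ∑ s ∈ E, f s = ∑ s, f s := fun f =>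
    Finset.add_sum_erase _ f (Finset.mem_univ smax)
  have hw : ∑ s ∈ E, margS P s = 1/2 - δ := by
    have := hEsum (margS P)
    rw [hsumS] at this
    linarith [hsmax]
  have hwle : ∑ s ∈ E, margS P s ≤ 1/2 := by linarith
  have hmle : ∀ s ∈ E, margS P s ≤ 1/2 := fun s hs =>
    le_trans (Finset.single_le_sum (fun t _ => (hSpos t).le) hs) hwle
  -- main chain
  have step1 : ∑ s, margS P s * TV (condYhatS P Q s) (condYS P s)
      ≤ ∑ s, margS P s * TV (condYS P s) (condYS P smax) :=
    le_trans hobjlow (le_trans (hopt Q' hQ'rule (by rw [hDDP']; exact hε)) (le_of_eq hobj'))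
  have step2 : ∑ s, margS P s * TV (condYS P s) (condYS P smax)
      = ∑ s ∈ E, margS P s * TV (condYS P s) (condYS P smax) := by
    rw [← hEsum (fun s => margS P s * TV (condYS P s) (condYS P smax))]
    rw [TV_self, mul_zero, zero_add]
  have L3 : ∑ s ∈ E, margS P s * TV (condYS P s) (condYS P smax)
      ≤ (∑ s ∈ E, margS P s * TV (condYhatS P Q s) (condYS P s))
        + (1/2) * (∑ s ∈ E, TV (condYhatS P Q s) (margYhat P Q))
        + (∑ s ∈ E, margS P s) * (TV (condYhatS P Q smax) (margYhat P Q)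
            + TV (condYhatS P Q smax) (condYS P smax)) := by
    rw [Finset.sum_mul, Finset.mul_sum, ← Finset.sum_add_distrib, ← Finset.sum_add_distrib]
    refine Finset.sum_le_sum fun s hs => ?_
    have t1 := TV_triangle (condYS P s) (condYhatS P Q s) (condYS P smax)
    have t2 := TV_triangle (condYhatS P Q s) (margYhat P Q) (condYS P smax)
    have t3 := TV_triangle (margYhat P Q) (condYhatS P Q smax) (condYS P smax)
    rw [TV_comm (condYS P s) (condYhatS P Q s)] at t1
    rw [TV_comm (margYhat P Q) (condYhatS P Q smax)] at t3
    have h1 : margS P s ≤ 1/2 := hmle s hs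
    have h2 : (0:ℝ) < margS P s := hSpos s
    have n1 := TV_nonneg (condYhatS P Q s) (margYhat P Q)
    have n2 := TV_nonneg (condYhatS P Q smax) (margYhat P Q)
    have n3 := TV_nonneg (condYhatS P Q smax) (condYS P smax)
    nlinarith [mul_le_mul_of_nonneg_right h1 n1,
      mul_le_mul_of_nonneg_left (by linarith : TV (condYS P s) (condYS P smax)
        ≤ TV (condYhatS P Q s) (condYS P s) + TV (condYhatS P Q s) (margYhat P Q)
          + (TV (condYhatS P Q smax) (margYhat P Q) + TV (condYhatS P Q smax) (condYS P smax)))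
        h2.le]
  -- cancel the common term
  set a := TV (condYhatS P Q smax) (condYS P smax) with ha_def
  have hsplitL : ∑ s, margS P s * TV (condYhatS P Q s) (condYS P s)
      = margS P smax * a + ∑ s ∈ E, margS P s * TV (condYhatS P Q s) (condYS P s) :=
    (hEsum (fun s => margS P s * TV (condYhatS P Q s) (condYS P s))).symm
  have hsplitTV : TV (condYhatS P Q smax) (margYhat P Q)
      + ∑ s ∈ E, TV (condYhatS P Q s) (margYhat P Q)
      = ∑ s, TV (condYhatS P Q s) (margYhat P Q) :=
    hEsum (fun s => TV (condYhatS P Q s) (margYhat P Q))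
  have hwb : (∑ s ∈ E, margS P s) * TV (condYhatS P Q smax) (margYhat P Q)
      ≤ (1/2) * TV (condYhatS P Q smax) (margYhat P Q) :=
    mul_le_mul_of_nonneg_right hwle (TV_nonneg _ _)
  have hkey2δ : 2 * δ * a ≤ ε / 4 := by
    have h := le_trans step1 (le_trans (le_of_eq step2) L3)
    rw [hsplitL] at h
    have hwa : (∑ s ∈ E, margS P s) * a = (1/2 - δ) * a := by rw [hw]
    have hsum2 : (1/2) * (∑ s ∈ E, TV (condYhatS P Q s) (margYhat P Q))
        + (1/2) * TV (condYhatS P Q smax) (margYhat P Q)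
        = (1/2) * ∑ s, TV (condYhatS P Q s) (margYhat P Q) := by
      rw [← hsplitTV]; ring
    have := hsumTV
    rw [mul_add] at h
    nlinarith [hwb, hwa]
  have ha8 : a ≤ ε / (8 * δ) := by
    rw [le_div_iff₀ (by positivity : (0:ℝ) < 8 * δ)]
    nlinarith [hkey2δ]
  have hrhs : (1/2 + 1/(4*δ)) * ε = ε/2 + 2 * (ε/(8*δ)) := by
    field_simp
    ring
  have htnn : 0 ≤ ε / (8*δ) := by positivity
  -- conclusion
  intro s
  by_cases hcase : s = smax
  · subst hcase
    rw [hrhs]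
    linarith [ha8, htnn, hε]
  · have hsE : s ∈ E := Finset.mem_erase.2 ⟨hcase, Finset.mem_univ s⟩
    have t1 := TV_triangle (condYhatS P Q s) (margYhat P Q) (condYS P smax)
    have t2 := TV_triangle (margYhat P Q) (condYhatS P Q smax) (condYS P smax)
    rw [TV_comm (margYhat P Q) (condYhatS P Q smax)] at t2
    have hpair : TV (condYhatS P Q s) (margYhat P Q)
        + TV (condYhatS P Q smax) (margYhat P Q) ≤ ε / 2 := by
      have hs1 : TV (condYhatS P Q s) (margYhat P Q)
          ≤ ∑ t ∈ E, TV (condYhatS P Q t) (margYhat P Q) :=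
        Finset.single_le_sum (fun t _ => TV_nonneg _ _) hsE
      have := hsplitTV
      linarith [hsumTV]
    rw [hrhs]
    linarith [ha8, htnn]
end
end

section
/- Consider the generalized fair learning problem: minimize E_{(x,s)∼P_{X,S}}[ TV(Q_{Ŷ|X=x,S=s}, P_{Y|X=x,S=s}) ] over conditional distributions Q_{Ŷ|X,S} subject to ρ_E(Ŷ; S) ≤ ε, where Ŷ is distributed according to Q_{Ŷ|X,S} · P_{X,S} and ρ_E is the chi-squared divergence between the joint distribution of (Ŷ, S) and the product of its marginals. Suppose there exists φ : 𝒳 × 𝒴 → ℝ such that P(X=x | Y=y, S=s) / P(X=x | S=s) = φ(x, y) for all x ∈ 𝒳, y ∈ 𝒴, s ∈ 𝒮, and s_max ∈ 𝒮 satisfies P_S(s_max) = 1/2 + δ for some δ > 0. Then for any optimal solution Q*, with u(ε) = max{ε, √ε}, the induced Ŷ satisfies: E_{s∼P_S}[ TV(P_{Ŷ|S=s}, P_{Y|S=s_max}) ] ≤ (1/2 + 1/(4δ)) · u(ε). -/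
open Finset

noncomputable section

variable {𝒳 𝒴 𝒮 : Type*} [Fintype 𝒳] [Fintype 𝒴] [Fintype 𝒮]

/-- Exponential Rényi mutual information (χ²-divergence between the joint distribution of
`(Ŷ, S)` and the product of its marginals), summed over pairs with positive product of
marginals. -/
def ERMI (P : 𝒳 → 𝒴 → 𝒮 → ℝ) (Q : 𝒳 → 𝒮 → 𝒴 → ℝ) : ℝ :=
  ∑ yh, ∑ s,
    if 0 < margYhat P Q yh * margS P s then
      (jointYhatS P Q yh s - margYhat P Q yh * margS P s) ^ 2 /
        (margYhat P Q yh * margS P s)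
    else 0
/-- Auxiliary: commuting a triple sum from `(a,b,c)` order to `(b,c,a)` order. -/
lemma sum3_rot {α β γ : Type*} [Fintype α] [Fintype β] [Fintype γ] (f : α → β → γ → ℝ) :
    ∑ a, ∑ b, ∑ c, f a b c = ∑ b, ∑ c, ∑ a, f a b c := by
  rw [Finset.sum_comm]
  exact Finset.sum_congr rfl fun b _ => Finset.sum_comm


/-- **Theorem 3 (ERMI case).** In the generalized fair learning problem, if the ratio
`P(x|y,s)/P(x|s)` does not depend on `s` and `P_S(s_max) = 1/2 + δ` with `δ > 0`, then
any optimal solution among rules with `ρ_E(Ŷ, S) ≤ ε` satisfies, with `u(ε) = max{ε, √ε}`,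
`E_{s∼P_S}[TV(P_{Ŷ|S=s}, P_{Y|S=s_max})] ≤ (1/2 + 1/(4δ)) u(ε)`. -/
theorem generalized_ermi_fair_optimal_inductive_bias
    (P : 𝒳 → 𝒴 → 𝒮 → ℝ)
    (hP0 : ∀ x y s, 0 ≤ P x y s)
    (hP1 : ∑ x, ∑ y, ∑ s, P x y s = 1)
    (hXS : ∀ x s, 0 < margXS P x s)
    (hYS : ∀ y s, 0 < margYS P y s)
    (φ : 𝒳 → 𝒴 → ℝ)
    (hφ : ∀ x y s, condRatio P x y s = φ x y)
    (smax : 𝒮) (δ : ℝ) (hδ : 0 < δ) (hsmax : margS P smax = 1 / 2 + δ)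
    (ε : ℝ)
    (Q : 𝒳 → 𝒮 → 𝒴 → ℝ) (hQ : IsRule Q)
    (hfair : ERMI P Q ≤ ε)
    (hopt : ∀ Q' : 𝒳 → 𝒮 → 𝒴 → ℝ, IsRule Q' → ERMI P Q' ≤ ε →
      objective P Q ≤ objective P Q') :
    ∑ s, margS P s * TV (condYhatS P Q s) (condYS P smax)
      ≤ (1 / 2 + 1 / (4 * δ)) * max ε (Real.sqrt ε) := by
  classical
  -- positivity of marginals
  have hmmax : 0 < margS P smax := by rw [hsmax]; linarith
  have h𝒳 : Nonempty 𝒳 := by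
    by_contra h
    rw [not_nonempty_iff] at h
    have h0 : margS P smax = 0 := by simp [margS]
    rw [h0] at hmmax; exact lt_irrefl _ hmmax
  have hm : ∀ s, 0 < margS P s := fun s =>
    Finset.sum_pos (fun x _ => hXS x s) Finset.univ_nonempty
  -- sums to one
  have hmsum : ∑ s, margS P s = 1 := by
    rw [← hP1]
    simp only [margS, margXS]
    rw [Finset.sum_comm]
    exact Finset.sum_congr rfl fun x _ => Finset.sum_comm
  have hYSsum : ∀ s, ∑ y, margYS P y s = margS P s := fun s => by
    simp only [margYS, margS, margXS]
    exact Finset.sum_comm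
  have hJnn : ∀ y s, 0 ≤ jointYhatS P Q y s := fun y s =>
    Finset.sum_nonneg fun x _ => mul_nonneg (hXS x s).le (hQ.1 x s y)
  have hνnn : ∀ y, 0 ≤ margYhat P Q y := fun y =>
    Finset.sum_nonneg fun s _ => hJnn y s
  have hν0 : ∀ y s, margYhat P Q y = 0 → jointYhatS P Q y s = 0 := by
    intro y s h
    exact (Finset.sum_eq_zero_iff_of_nonneg (fun s _ => hJnn y s)).mp h s (Finset.mem_univ s)
  have hνsum : ∑ y, margYhat P Q y = 1 := by
    simp only [margYhat, jointYhatS]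
    rw [sum3_rot fun y s x => margXS P x s * Q x s y]
    calc ∑ s, ∑ x, ∑ y, margXS P x s * Q x s y
        = ∑ s, ∑ x, margXS P x s := by
          refine Finset.sum_congr rfl fun s _ => Finset.sum_congr rfl fun x _ => ?_
          rw [← Finset.mul_sum, hQ.2 x s, mul_one]
      _ = 1 := hmsum
  have hε : 0 ≤ ε := by
    refine le_trans (Finset.sum_nonneg fun y _ => Finset.sum_nonneg fun s _ => ?_) hfair
    split_ifs with h
    · exact div_nonneg (sq_nonneg _) h.le
    · exact le_refl 0
  -- B1 : total unfairness in L1, bounded by √ε via Cauchy-Schwarz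
  set B1 := ∑ y, ∑ s, |jointYhatS P Q y s - margYhat P Q y * margS P s| with hB1def
  have hB1nn : 0 ≤ B1 :=
    Finset.sum_nonneg fun y _ => Finset.sum_nonneg fun s _ => abs_nonneg _
  have hpair : ∀ F : 𝒴 → 𝒮 → ℝ, ∑ p : 𝒴 × 𝒮, F p.1 p.2 = ∑ y, ∑ s, F y s := by
    intro F
    rw [← Finset.univ_product_univ, Finset.sum_product']
  have hB1 : B1 ≤ Real.sqrt ε := by
    set f : 𝒴 × 𝒮 → ℝ := fun p => if 0 < margYhat P Q p.1 * margS P p.2 then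
        |jointYhatS P Q p.1 p.2 - margYhat P Q p.1 * margS P p.2| /
          Real.sqrt (margYhat P Q p.1 * margS P p.2) else 0 with hf
    set g : 𝒴 × 𝒮 → ℝ := fun p => Real.sqrt (margYhat P Q p.1 * margS P p.2) with hg
    have hCS := Finset.sum_mul_sq_le_sq_mul_sq Finset.univ f g
    have hzero : ∀ p : 𝒴 × 𝒮, ¬ 0 < margYhat P Q p.1 * margS P p.2 →
        jointYhatS P Q p.1 p.2 = 0 ∧ margYhat P Q p.1 = 0 := by
      intro p h
      have hprod : margYhat P Q p.1 * margS P p.2 = 0 :=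
        le_antisymm (not_lt.mp h) (mul_nonneg (hνnn p.1) (hm p.2).le)
      have hν : margYhat P Q p.1 = 0 :=
        (mul_eq_zero.mp hprod).resolve_right (hm p.2).ne'
      exact ⟨hν0 p.1 p.2 hν, hν⟩
    have h1 : ∑ p : 𝒴 × 𝒮, f p * g p = B1 := by
      rw [hB1def, ← hpair fun y s => |jointYhatS P Q y s - margYhat P Q y * margS P s|]
      refine Finset.sum_congr rfl fun p _ => ?_
      simp only [hf, hg]
      split_ifs with h
      · exact div_mul_cancel₀ _ (Real.sqrt_ne_zero'.mpr h)
      · obtain ⟨hJ, hν⟩ := hzero p h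
        rw [hJ, hν]
        simp
    have h2 : ∑ p : 𝒴 × 𝒮, f p ^ 2 = ERMI P Q := by
      rw [show ERMI P Q = ∑ p : 𝒴 × 𝒮, (if 0 < margYhat P Q p.1 * margS P p.2 then
          (jointYhatS P Q p.1 p.2 - margYhat P Q p.1 * margS P p.2) ^ 2 /
            (margYhat P Q p.1 * margS P p.2) else 0) from (hpair fun y s =>
          (if 0 < margYhat P Q y * margS P s then
          (jointYhatS P Q y s - margYhat P Q y * margS P s) ^ 2 /
            (margYhat P Q y * margS P s) else 0)).symm]
      refine Finset.sum_congr rfl fun p _ => ?_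
      simp only [hf]
      split_ifs with h
      · rw [div_pow, sq_abs, Real.sq_sqrt (le_of_lt h)]
      · rw [zero_pow two_ne_zero]
    have h3 : ∑ p : 𝒴 × 𝒮, g p ^ 2 = 1 := by
      have : ∀ p : 𝒴 × 𝒮, g p ^ 2 = margYhat P Q p.1 * margS P p.2 := fun p =>
        Real.sq_sqrt (mul_nonneg (hνnn p.1) (hm p.2).le)
      rw [Finset.sum_congr rfl fun p _ => this p,
        hpair fun y s => margYhat P Q y * margS P s]
      calc ∑ y, ∑ s, margYhat P Q y * margS P s
          = ∑ y, margYhat P Q y * ∑ s, margS P s := by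
            exact Finset.sum_congr rfl fun y _ => (Finset.mul_sum _ _ _).symm
        _ = 1 := by rw [hmsum]; simp [hνsum]
    have hB1sq : B1 ^ 2 ≤ ε := by
      rw [← h1]
      calc (∑ p : 𝒴 × 𝒮, f p * g p) ^ 2
          ≤ (∑ p : 𝒴 × 𝒮, f p ^ 2) * ∑ p : 𝒴 × 𝒮, g p ^ 2 := hCS
        _ = ERMI P Q := by rw [h2, h3, mul_one]
        _ ≤ ε := hfair
    calc B1 = Real.sqrt (B1 ^ 2) := (Real.sqrt_sq hB1nn).symm
      _ ≤ Real.sqrt ε := Real.sqrt_le_sqrt hB1sq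
  -- the objective rewritten as an explicit triple sum (for arbitrary rules)
  have hobjR : ∀ R : 𝒳 → 𝒮 → 𝒴 → ℝ, objective P R =
      (1 / 2) * ∑ s, ∑ y, ∑ x, margXS P x s * |R x s y - condYXS P x s y| := by
    intro R
    have e1 : objective P R
        = ∑ x, ∑ s, ∑ y, 1 / 2 * (margXS P x s * |R x s y - condYXS P x s y|) := by
      simp only [objective, TV]
      refine Finset.sum_congr rfl fun x _ => Finset.sum_congr rfl fun s _ => ?_
      rw [Finset.mul_sum, Finset.mul_sum]
      exact Finset.sum_congr rfl fun y _ => by ring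
    rw [e1, sum3_rot fun x s y => 1 / 2 * (margXS P x s * |R x s y - condYXS P x s y|),
      Finset.mul_sum]
    refine Finset.sum_congr rfl fun s _ => ?_
    rw [Finset.mul_sum]
    exact Finset.sum_congr rfl fun y _ => (Finset.mul_sum _ _ _).symm
  -- A1 : L1 distance between joint (Ŷ,S) and joint (Y,S), bounded by twice the objective
  set A1 := ∑ s, ∑ y, |jointYhatS P Q y s - margYS P y s| with hA1def
  have hA1 : A1 ≤ 2 * objective P Q := by
    rw [hobjR Q]
    rw [hA1def]
    have h2 : 2 * ((1:ℝ) / 2 * ∑ s, ∑ y, ∑ x, margXS P x s * |Q x s y - condYXS P x s y|)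
        = ∑ s, ∑ y, ∑ x, margXS P x s * |Q x s y - condYXS P x s y| := by ring
    rw [h2]
    refine Finset.sum_le_sum fun s _ => Finset.sum_le_sum fun y _ => ?_
    have hdiff : jointYhatS P Q y s - margYS P y s
        = ∑ x, (margXS P x s * Q x s y - P x y s) := by
      rw [Finset.sum_sub_distrib]; rfl
    calc |jointYhatS P Q y s - margYS P y s|
        ≤ ∑ x, |margXS P x s * Q x s y - P x y s| := by
          rw [hdiff]; exact Finset.abs_sum_le_sum_abs _ _
      _ = ∑ x, margXS P x s * |Q x s y - condYXS P x s y| := by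
          refine Finset.sum_congr rfl fun x _ => ?_
          rw [← abs_of_pos (hXS x s), ← abs_mul, mul_sub, abs_of_pos (hXS x s)]
          congr 2
          rw [condYXS, mul_div_cancel₀ _ (hXS x s).ne']
  -- properties of φ
  have hφeq : ∀ x y s, φ x y = P x y s * margS P s / (margYS P y s * margXS P x s) := by
    intro x y s
    rw [← hφ x y s, condRatio]
    rw [div_div_div_eq]
  have hφnn : ∀ x y, 0 ≤ φ x y := fun x y => by
    rw [hφeq x y smax]
    exact div_nonneg (mul_nonneg (hP0 x y smax) hmmax.le)
      (mul_nonneg (hYS y smax).le (hXS x smax).le)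
  have hkey : ∀ x y s, φ x y * condYS P s y = condYXS P x s y := by
    intro x y s
    have h1 : margYS P y s ≠ 0 := (hYS y s).ne'
    have h2 : margXS P x s ≠ 0 := (hXS x s).ne'
    have h3 : margS P s ≠ 0 := (hm s).ne'
    rw [hφeq x y s, condYS, condYXS]
    field_simp
  have hsumφ : ∀ y s, ∑ x, φ x y * margXS P x s = margS P s := by
    intro y s
    have h1 : margYS P y s ≠ 0 := (hYS y s).ne'
    have h3 : margS P s ≠ 0 := (hm s).ne'
    have hx : ∀ x, φ x y * margXS P x s = P x y s * (margS P s / margYS P y s) := by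
      intro x
      have h2 : margXS P x s ≠ 0 := (hXS x s).ne'
      rw [hφeq x y s]
      field_simp
    rw [Finset.sum_congr rfl fun x _ => hx x, ← Finset.sum_mul,
      show (∑ x, P x y s) = margYS P y s from rfl]
    field_simp
  -- the comparison rule Q'
  set Q' : 𝒳 → 𝒮 → 𝒴 → ℝ := fun x s y => φ x y * condYS P smax y with hQ'def
  have hpnn : ∀ s y, 0 < condYS P s y := fun s y => div_pos (hYS y s) (hm s)
  have hQ'rule : IsRule Q' := by
    constructor
    · intro x s y
      exact mul_nonneg (hφnn x y) (hpnn smax y).le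
    · intro x s
      calc ∑ y, Q' x s y = ∑ y, condYXS P x smax y :=
            Finset.sum_congr rfl fun y _ => hkey x y smax
        _ = 1 := by
            simp only [condYXS]
            rw [← Finset.sum_div]
            exact div_self (hXS x smax).ne'
  have hJ' : ∀ y s, jointYhatS P Q' y s = margS P s * condYS P smax y := by
    intro y s
    simp only [jointYhatS, hQ'def]
    calc ∑ x, margXS P x s * (φ x y * condYS P smax y)
        = (∑ x, φ x y * margXS P x s) * condYS P smax y := by
          rw [Finset.sum_mul]
          exact Finset.sum_congr rfl fun x _ => by ring
      _ = margS P s * condYS P smax y := by rw [hsumφ]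
  have hν' : ∀ y, margYhat P Q' y = condYS P smax y := by
    intro y
    simp only [margYhat]
    rw [Finset.sum_congr rfl fun s _ => hJ' y s, ← Finset.sum_mul, hmsum, one_mul]
  have hERMI' : ERMI P Q' ≤ ε := by
    have : ERMI P Q' = 0 := by
      refine Finset.sum_eq_zero fun y _ => Finset.sum_eq_zero fun s _ => ?_
      have hz : jointYhatS P Q' y s - margYhat P Q' y * margS P s = 0 := by
        rw [hJ' y s, hν' y]; ring
      rw [hz]
      split_ifs with h
      · rw [zero_pow two_ne_zero, zero_div]
      · rfl
    rw [this]; exact hε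
  -- D1 : the baseline discrepancy, achieved by Q'
  set D1 := ∑ s, ∑ y, margS P s * |condYS P smax y - condYS P s y| with hD1def
  have hobjQ' : objective P Q' = (1 / 2) * D1 := by
    rw [hobjR Q', hD1def]
    congr 1
    refine Finset.sum_congr rfl fun s _ => Finset.sum_congr rfl fun y _ => ?_
    calc ∑ x, margXS P x s * |Q' x s y - condYXS P x s y|
        = ∑ x, φ x y * margXS P x s * |condYS P smax y - condYS P s y| := by
          refine Finset.sum_congr rfl fun x _ => ?_
          rw [hQ'def, ← hkey x y s, ← mul_sub, abs_mul, abs_of_nonneg (hφnn x y)]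
          ring
      _ = margS P s * |condYS P smax y - condYS P s y| := by
          rw [← Finset.sum_mul, hsumφ]
  -- optimality: A1 ≤ D1
  have hAD : A1 ≤ D1 := by
    have h := hopt Q' hQ'rule hERMI'
    rw [hobjQ'] at h
    have := hA1
    linarith
  -- C1 : distance between ν ⊗ m and the joint (Y,S)
  set C1 := ∑ s, ∑ y, margS P s * |margYhat P Q y - condYS P s y| with hC1def
  have hmargYS : ∀ y s, margS P s * condYS P s y = margYS P y s := by
    intro y s
    rw [condYS, mul_div_cancel₀ _ (hm s).ne']
  have hC1 : C1 ≤ A1 + B1 := by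
    have hB1' : B1 = ∑ s, ∑ y, |jointYhatS P Q y s - margYhat P Q y * margS P s| := by
      rw [hB1def]; exact Finset.sum_comm
    rw [hB1', hA1def, hC1def, ← Finset.sum_add_distrib]
    refine Finset.sum_le_sum fun s _ => ?_
    rw [← Finset.sum_add_distrib]
    refine Finset.sum_le_sum fun y _ => ?_
    have : margS P s * |margYhat P Q y - condYS P s y|
        = |margYhat P Q y * margS P s - margYS P y s| := by
      rw [← abs_of_pos (hm s), ← abs_mul, mul_sub, abs_of_pos (hm s), hmargYS]
      congr 2
      ring
    rw [this]
    calc |margYhat P Q y * margS P s - margYS P y s|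
        ≤ |margYhat P Q y * margS P s - jointYhatS P Q y s|
          + |jointYhatS P Q y s - margYS P y s| := abs_sub_le _ _ _
      _ = |jointYhatS P Q y s - margYS P y s|
          + |jointYhatS P Q y s - margYhat P Q y * margS P s| := by
          rw [abs_sub_comm]
          ring
  -- the median argument: D1 + 2δ·t1 ≤ C1
  set t1 := ∑ y, |margYhat P Q y - condYS P smax y| with ht1def
  have ht1nn : 0 ≤ t1 := Finset.sum_nonneg fun y _ => abs_nonneg _
  have hmed : D1 + 2 * δ * t1 ≤ C1 := by
    have hper : ∀ y, ∑ s, margS P s * |condYS P smax y - condYS P s y|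
        + 2 * δ * |margYhat P Q y - condYS P smax y|
        ≤ ∑ s, margS P s * |margYhat P Q y - condYS P s y| := by
      intro y
      have hg : ∀ s, 0 ≤ margS P s * (|margYhat P Q y - condYS P s y|
          - |condYS P smax y - condYS P s y| + |margYhat P Q y - condYS P smax y|) := by
        intro s
        refine mul_nonneg (hm s).le ?_
        have := abs_sub_le (condYS P smax y) (margYhat P Q y) (condYS P s y)
        have h2 := abs_sub_comm (condYS P smax y) (margYhat P Q y)
        rw [h2] at this
        linarith
      have hsingle := Finset.single_le_sum (fun s _ => hg s) (Finset.mem_univ smax)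
      have hsum : ∑ s, margS P s * (|margYhat P Q y - condYS P s y|
            - |condYS P smax y - condYS P s y| + |margYhat P Q y - condYS P smax y|)
          = ∑ s, margS P s * |margYhat P Q y - condYS P s y|
            - ∑ s, margS P s * |condYS P smax y - condYS P s y|
            + |margYhat P Q y - condYS P smax y| := by
        simp only [mul_sub, mul_add]
        rw [Finset.sum_add_distrib, Finset.sum_sub_distrib, ← Finset.sum_mul, hmsum, one_mul]
      have hatmax : margS P smax * (|margYhat P Q y - condYS P smax y|
            - |condYS P smax y - condYS P smax y| + |margYhat P Q y - condYS P smax y|)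
          = (1 + 2 * δ) * |margYhat P Q y - condYS P smax y| := by
        rw [sub_self, abs_zero, hsmax]
        ring
      rw [hsum, hatmax] at hsingle
      linarith
    rw [hD1def, hC1def, ht1def]
    rw [show (∑ s, ∑ y, margS P s * |condYS P smax y - condYS P s y|)
        = ∑ y, ∑ s, margS P s * |condYS P smax y - condYS P s y| from Finset.sum_comm,
      show (∑ s, ∑ y, margS P s * |margYhat P Q y - condYS P s y|)
        = ∑ y, ∑ s, margS P s * |margYhat P Q y - condYS P s y| from Finset.sum_comm]
    rw [Finset.mul_sum, ← Finset.sum_add_distrib]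
    exact Finset.sum_le_sum fun y _ => hper y
  -- conclude: t1 is small
  have ht1 : 2 * δ * t1 ≤ B1 := by linarith
  -- bound the goal
  have hgoal2 : 2 * (∑ s, margS P s * TV (condYhatS P Q s) (condYS P smax)) ≤ B1 + t1 := by
    have hterm : ∀ s, 2 * (margS P s * TV (condYhatS P Q s) (condYS P smax))
        = ∑ y, |jointYhatS P Q y s - margS P s * condYS P smax y| := by
      intro s
      rw [TV, Finset.mul_sum, Finset.mul_sum, Finset.mul_sum]
      refine Finset.sum_congr rfl fun y _ => ?_
      rw [condYhatS]
      rw [show (2:ℝ) * (margS P s * (1 / 2 * |jointYhatS P Q y s / margS P s - condYS P smax y|))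
          = margS P s * |jointYhatS P Q y s / margS P s - condYS P smax y| from by ring]
      rw [← abs_of_pos (hm s), ← abs_mul, mul_sub, abs_of_pos (hm s),
        mul_div_cancel₀ _ (hm s).ne']
    rw [Finset.mul_sum, Finset.sum_congr rfl fun s _ => hterm s]
    have hB1' : B1 = ∑ s, ∑ y, |jointYhatS P Q y s - margYhat P Q y * margS P s| := by
      rw [hB1def]; exact Finset.sum_comm
    have ht1' : t1 = ∑ s, margS P s * t1 := by
      rw [← Finset.sum_mul, hmsum, one_mul]
    rw [hB1', ht1', ← Finset.sum_add_distrib]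
    refine Finset.sum_le_sum fun s _ => ?_
    rw [ht1def, Finset.mul_sum, ← Finset.sum_add_distrib]
    refine Finset.sum_le_sum fun y _ => ?_
    have habs : margS P s * |margYhat P Q y - condYS P smax y|
        = |margYhat P Q y * margS P s - margS P s * condYS P smax y| := by
      rw [← abs_of_pos (hm s), ← abs_mul, mul_sub, abs_of_pos (hm s)]
      congr 2
      ring
    rw [habs]
    exact abs_sub_le _ _ _
  -- final numeric assembly
  set G := ∑ s, margS P s * TV (condYhatS P Q s) (condYS P smax) with hGdef
  have hGsqrt : G ≤ (1 / 2 + 1 / (4 * δ)) * Real.sqrt ε := by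
    have heq : (1 / 2 + 1 / (4 * δ)) * Real.sqrt ε
        = (2 * δ + 1) * Real.sqrt ε / (4 * δ) := by
      field_simp
      ring
    rw [heq, le_div_iff₀ (by linarith : (0:ℝ) < 4 * δ)]
    nlinarith [hB1, ht1, hgoal2, hB1nn, ht1nn, hδ, Real.sqrt_nonneg ε]
  calc G ≤ (1 / 2 + 1 / (4 * δ)) * Real.sqrt ε := hGsqrt
    _ ≤ (1 / 2 + 1 / (4 * δ)) * max ε (Real.sqrt ε) := by
        refine mul_le_mul_of_nonneg_left (le_max_right _ _) ?_
        have : 0 < 1 / (4 * δ) := by positivity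
        linarith
end
end

section
/- Suppose there exists φ : 𝒳 × 𝒴 → ℝ such that P(X=x | Y=y, S=s) / P(X=x | S=s) = φ(x, y) for all x ∈ 𝒳, y ∈ 𝒴, s ∈ 𝒮, and fix s_max ∈ 𝒮. Define Q̃(ŷ | x, s) := P(Y=ŷ | S=s_max) · φ(x, ŷ). Then Q̃ is a valid conditional distribution (for every (x,s), Q̃(· | x, s) is a probability distribution on 𝒴), and under the joint distribution Q̃ · P_{X,S} the predicted variable Ŷ is independent of S with, for every s ∈ 𝒮 and ŷ ∈ 𝒴: ∑_{x∈𝒳} P(X=x | S=s) · Q̃(ŷ | x, s) = P(Y=ŷ | S=s_max). -/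
open Finset

noncomputable section

variable {𝒳 𝒴 𝒮 : Type*} [Fintype 𝒳] [Fintype 𝒴] [Fintype 𝒮]

/-- The conditional distribution `Q̃(ŷ | x, s) := P(Y=ŷ | S=s_max) · φ(x, ŷ)`. -/
def Qtilde (P : 𝒳 → 𝒴 → 𝒮 → ℝ) (φ : 𝒳 → 𝒴 → ℝ) (smax : 𝒮)
    (x : 𝒳) (s : 𝒮) (yh : 𝒴) : ℝ :=
  condYS P smax yh * φ x yh

/-- If the ratio `P(x|y,s)/P(x|s) = φ(x,y)` does not depend on `s`, then
`Q̃(ŷ|x,s) = P(Y=ŷ|S=s_max) φ(x,ŷ)` is a valid conditional distribution, and under the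
induced joint `Q̃ · P_{X,S}` the prediction `Ŷ` is independent of `S`, with
`∑_x P(X=x|S=s) Q̃(ŷ|x,s) = P(Y=ŷ|S=s_max)` for every `s, ŷ`. -/
theorem qtilde_valid_and_independent
    (P : 𝒳 → 𝒴 → 𝒮 → ℝ)
    (hP0 : ∀ x y s, 0 ≤ P x y s)
    (hP1 : ∑ x, ∑ y, ∑ s, P x y s = 1)
    (hXS : ∀ x s, 0 < margXS P x s)
    (hYS : ∀ y s, 0 < margYS P y s)
    (φ : 𝒳 → 𝒴 → ℝ)
    (hφ : ∀ x y s, condRatio P x y s = φ x y)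
    (smax : 𝒮) :
    (∀ x s yh, 0 ≤ Qtilde P φ smax x s yh) ∧
    (∀ x s, ∑ yh, Qtilde P φ smax x s yh = 1) ∧
    (∀ s yh, ∑ x, (margXS P x s / margS P s) * Qtilde P φ smax x s yh
        = condYS P smax yh) := by

  -- `𝒳` is nonempty
  have hXne : Nonempty 𝒳 := by
    by_contra h
    rw [not_nonempty_iff] at h
    simp [Finset.univ_eq_empty] at hP1
  have hS : ∀ s, 0 < margS P s := by
    intro s
    exact Finset.sum_pos (fun x _ => hXS x s) Finset.univ_nonempty
  have hφ' : ∀ x y s, φ x y = (P x y s / margYS P y s) * (margS P s / margXS P x s) := by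
    intro x y s
    rw [← hφ x y s, condRatio]
    have h1 := (hYS y s).ne'
    have h2 := (hXS x s).ne'
    have h3 := (hS s).ne'
    field_simp
  have hφ0 : ∀ x y, 0 ≤ φ x y := by
    intro x y
    rw [hφ' x y smax]
    exact mul_nonneg (div_nonneg (hP0 x y smax) (hYS y smax).le)
      (div_nonneg (hS smax).le (hXS x smax).le)
  have hCYS0 : ∀ y, 0 ≤ condYS P smax y := by
    intro y
    exact div_nonneg (Finset.sum_nonneg fun x _ => hP0 x y smax) (hS smax).le
  refine ⟨fun x s yh => mul_nonneg (hCYS0 yh) (hφ0 x yh), ?_, ?_⟩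
  · intro x s
    have h1 : ∀ yh, Qtilde P φ smax x s yh = P x yh smax / margXS P x smax := by
      intro yh
      rw [Qtilde, hφ' x yh smax, condYS]
      have h1 := (hYS yh smax).ne'
      have h2 := (hS smax).ne'
      have h3 := (hXS x smax).ne'
      field_simp
    rw [Finset.sum_congr rfl fun yh _ => h1 yh, ← Finset.sum_div]
    rw [div_eq_one_iff_eq (hXS x smax).ne']
    rfl
  · intro s yh
    have h1 : ∀ x, (margXS P x s / margS P s) * Qtilde P φ smax x s yh
        = condYS P smax yh * (P x yh s / margYS P yh s) := by
      intro x
      rw [Qtilde, hφ' x yh s]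
      have h1 := (hXS x s).ne'
      have h2 := (hS s).ne'
      have h3 := (hYS yh s).ne'
      field_simp
    rw [Finset.sum_congr rfl fun x _ => h1 x, ← Finset.mul_sum, ← Finset.sum_div]
    have : (∑ x, P x yh s) = margYS P yh s := rfl
    rw [this, div_self (hYS yh s).ne', mul_one]
end
end
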